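/- Let A ∈ GL(n,ℝ) be contracting and let S be a symmetric positive definite real n×n matrix; set C := A + (Aᵀ)⁻¹S. Then there exists a unique invertible symmetric real n×n matrix Y satisfying the fixed point equation YCY + Y(Aᵀ)⁻¹ − AY = 0; this Y is negative definite, and it is given explicitly by Y = −(∑_{i=0}^∞ (Aᵀ)ⁱ (AᵀA + S) Aⁱ)⁻¹. -/

import Mathlib

open Matrix

/-- A real square matrix is contracting if every complex root of its characteristic
polynomial has absolute value strictly less than `1`. -/
def Contracting {n : ℕ} (A : Matrix (Fin n) (Fin n) ℝ) : Prop :=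
  ∀ μ : ℂ, (A.map (algebraMap ℝ ℂ)).charpoly.IsRoot μ → ‖μ‖ < 1

section aux
open Filter
attribute [local instance] Matrix.linftyOpNormedAddCommGroup Matrix.linftyOpNormedRing
  Matrix.linftyOpNormedAlgebra Matrix.linftyOpNormedSpace

variable {n : ℕ}

lemma mem_spectrum_iff_isRoot (B : Matrix (Fin n) (Fin n) ℂ) (μ : ℂ) :
    μ ∈ spectrum ℂ B ↔ B.charpoly.IsRoot μ := by
  have hmap : (charmatrix B).map (Polynomial.eval μ) = (algebraMap ℂ (Matrix (Fin n) (Fin n) ℂ)) μ - B := by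
    ext i j
    rcases eq_or_ne i j with rfl | h
    · simp [charmatrix_apply_eq, Matrix.algebraMap_matrix_apply]
    · simp [charmatrix_apply_ne _ _ _ h, Matrix.algebraMap_matrix_apply, h]
  have hdet : B.charpoly.eval μ = ((algebraMap ℂ (Matrix (Fin n) (Fin n) ℂ)) μ - B).det := by
    rw [Matrix.charpoly, ← hmap]
    exact (RingHom.map_det (Polynomial.evalRingHom μ) (charmatrix B)).symm ▸ rfl
  rw [spectrum.mem_iff, Polynomial.IsRoot, hdet, Matrix.isUnit_iff_isUnit_det,
    isUnit_iff_ne_zero, not_ne_iff]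

lemma norm_map_complex (M : Matrix (Fin n) (Fin n) ℝ) :
    ‖M.map (algebraMap ℝ ℂ)‖ = ‖M‖ := by
  rw [Matrix.linfty_opNorm_def, Matrix.linfty_opNorm_def]
  congr 1
  ext i
  simp [Matrix.map_apply, Complex.nnnorm_real]

lemma contracting_norm_pow {A : Matrix (Fin n) (Fin n) ℝ} (hAc : Contracting A) :
    ∃ r : ℝ, 0 ≤ r ∧ r < 1 ∧ ∀ᶠ k in atTop, ‖A ^ k‖ ≤ r ^ k := by
  haveI : CompleteSpace (Matrix (Fin n) (Fin n) ℂ) :=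
    FiniteDimensional.complete ℂ _
  set B := A.map (algebraMap ℝ ℂ) with hB
  have hρ : spectralRadius ℂ B < 1 := by
    rcases (spectrum ℂ B).eq_empty_or_nonempty with h | h
    · simp only [spectralRadius, h]
      simpa using ENNReal.zero_lt_one
    · have := spectrum.spectralRadius_lt_of_forall_lt_of_nonempty h
        (r := 1) (fun k hk => by
          have h1 := hAc k ((mem_spectrum_iff_isRoot B k).mp hk)
          exact_mod_cast h1)
      simpa using this
  obtain ⟨c, hc1, hc2⟩ := ENNReal.lt_iff_exists_nnreal_btwn.mp hρ
  have hgel := spectrum.pow_nnnorm_pow_one_div_tendsto_nhds_spectralRadius B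
  have hev : ∀ᶠ k : ℕ in atTop, (‖B ^ k‖₊ : ENNReal) ^ (1 / (k : ℝ)) < (c : ENNReal) :=
    hgel.eventually_lt_const hc1
  refine ⟨c, c.coe_nonneg, by exact_mod_cast hc2, ?_⟩
  filter_upwards [hev, Filter.eventually_ge_atTop 1] with k hk hk1
  have hkne : (k : ℝ) ≠ 0 := by positivity
  have h2 : (‖B ^ k‖₊ : ENNReal) ≤ (c : ENNReal) ^ (k : ℕ) := by
    have h3 : ((‖B ^ k‖₊ : ENNReal) ^ (1 / (k : ℝ))) ^ (k : ℕ) ≤ (c : ENNReal) ^ (k : ℕ) :=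
      pow_le_pow_left' hk.le k
    rwa [← ENNReal.rpow_natCast ((‖B ^ k‖₊ : ENNReal) ^ (1 / (k : ℝ))) k,
      ← ENNReal.rpow_mul, one_div, inv_mul_cancel₀ hkne, ENNReal.rpow_one] at h3
  have h4 : ‖B ^ k‖ ≤ (c : ℝ) ^ k := by exact_mod_cast h2
  have h5 : B ^ k = (A ^ k).map (algebraMap ℝ ℂ) := by
    simp only [hB, ← RingHom.mapMatrix_apply, map_pow]
  rw [h5, norm_map_complex] at h4
  exact h4

lemma contracting_transpose {A : Matrix (Fin n) (Fin n) ℝ} (hAc : Contracting A) :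
    Contracting Aᵀ := by
  intro μ hμ
  apply hAc μ
  have h1 : (Aᵀ.map (algebraMap ℝ ℂ)) = (A.map (algebraMap ℝ ℂ))ᵀ := by
    ext i j; simp
  have h2 : ((A.map (algebraMap ℝ ℂ))ᵀ).charpoly = (A.map (algebraMap ℝ ℂ)).charpoly := by
    rw [Matrix.charpoly, Matrix.charpoly]
    have : charmatrix (A.map (algebraMap ℝ ℂ))ᵀ = (charmatrix (A.map (algebraMap ℝ ℂ)))ᵀ := by
      ext i j
      rcases eq_or_ne i j with rfl | h
      · simp [charmatrix_apply_eq]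
      · simp [charmatrix_apply_ne _ _ _ h, charmatrix_apply_ne _ _ _ (Ne.symm h)]
    rw [this, Matrix.det_transpose]
  rwa [h1, h2] at hμ

theorem master (A S : Matrix (Fin n) (Fin n) ℝ)
    (hAc : Contracting A) (hS : S.PosDef) :
    (∑' i : ℕ, Aᵀ ^ i * (Aᵀ * A + S) * A ^ i).PosDef ∧
    (∑' i : ℕ, Aᵀ ^ i * (Aᵀ * A + S) * A ^ i).IsSymm ∧
    (∑' i : ℕ, Aᵀ ^ i * (Aᵀ * A + S) * A ^ i) =
      Aᵀ * (∑' i : ℕ, Aᵀ ^ i * (Aᵀ * A + S) * A ^ i) * A + (Aᵀ * A + S) ∧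
    ∀ W : Matrix (Fin n) (Fin n) ℝ, W = Aᵀ * W * A + (Aᵀ * A + S) →
      W = (∑' i : ℕ, Aᵀ ^ i * (Aᵀ * A + S) * A ^ i) := by
  haveI : CompleteSpace (Matrix (Fin n) (Fin n) ℝ) :=
    FiniteDimensional.complete ℝ _
  set G := Aᵀ * A + S with hGdef
  set f : ℕ → Matrix (Fin n) (Fin n) ℝ := fun k => Aᵀ ^ k * G * A ^ k with hfdef
  obtain ⟨r₁, hr₁0, hr₁1, hev₁⟩ := contracting_norm_pow hAc
  obtain ⟨r₂, hr₂0, hr₂1, hev₂⟩ := contracting_norm_pow (contracting_transpose hAc)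
  -- G is positive definite
  have hGsymm' : Gᵀ = G := by
    have hSsymm : Sᵀ = S := by
      have := hS.isHermitian
      rwa [Matrix.IsHermitian, conjTranspose_eq_transpose_of_trivial] at this
    simp [hGdef, Matrix.transpose_add, Matrix.transpose_mul, hSsymm]
  have hG : G.PosDef := by
    have h1 : (Aᵀ * A).PosSemidef := by
      have := Matrix.posSemidef_conjTranspose_mul_self A
      rwa [conjTranspose_eq_transpose_of_trivial] at this
    exact Matrix.PosDef.posSemidef_add h1 hS
  -- summability
  have hsummable : Summable f := by
    apply Summable.of_norm_bounded_eventually_nat (g := fun k => ‖G‖ * (r₂ * r₁) ^ k)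
    · apply Summable.mul_left
      apply summable_geometric_of_lt_one (by positivity)
      calc r₂ * r₁ ≤ 1 * r₁ := by nlinarith
        _ < 1 := by linarith
    · filter_upwards [hev₁, hev₂] with k hk1 hk2
      calc ‖Aᵀ ^ k * G * A ^ k‖ ≤ ‖Aᵀ ^ k * G‖ * ‖A ^ k‖ := norm_mul_le _ _
        _ ≤ ‖Aᵀ ^ k‖ * ‖G‖ * ‖A ^ k‖ := by
            apply mul_le_mul_of_nonneg_right (norm_mul_le _ _) (norm_nonneg _)
        _ ≤ r₂ ^ k * ‖G‖ * r₁ ^ k := by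
            have h3 : (0:ℝ) ≤ r₂ ^ k := by positivity
            have h4 : (0:ℝ) ≤ ‖Aᵀ ^ k‖ * ‖G‖ := by positivity
            apply mul_le_mul (mul_le_mul_of_nonneg_right hk2 (norm_nonneg G)) hk1
              (norm_nonneg _) (by positivity)
        _ = ‖G‖ * (r₂ * r₁) ^ k := by ring
  have hsum : HasSum f (∑' i : ℕ, f i) := hsummable.hasSum
  set X := ∑' i : ℕ, f i with hXdef
  -- each term is positive semidefinite and symmetric
  have hfk : ∀ k, (f k).PosSemidef := by
    intro k
    have := hG.posSemidef.conjTranspose_mul_mul_same (A ^ k)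
    rwa [conjTranspose_eq_transpose_of_trivial, Matrix.transpose_pow] at this
  have hfksymm : ∀ k, (f k)ᵀ = f k := fun k => by
    simp [hfdef, Matrix.transpose_mul, Matrix.transpose_pow, hGsymm', Matrix.mul_assoc]
  -- X is symmetric
  have hXsymm : X.IsSymm := by
    rw [Matrix.IsSymm, hXdef, Matrix.transpose_tsum]
    exact tsum_congr fun k => hfksymm k
  -- the fixed point equation
  have hAXA : HasSum (fun k => f (k + 1)) (Aᵀ * X * A) := by
    have h := hsum.mapL (LinearMap.toContinuousLinearMap
      ({ toFun := fun M => Aᵀ * M * A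
         map_add' := fun M N => by simp [Matrix.mul_add, Matrix.add_mul]
         map_smul' := fun c M => by
           simp [Matrix.mul_smul, Matrix.smul_mul] } :
        Matrix (Fin n) (Fin n) ℝ →ₗ[ℝ] Matrix (Fin n) (Fin n) ℝ))
    simp only [LinearMap.coe_toContinuousLinearMap', LinearMap.coe_mk, AddHom.coe_mk] at h
    have heq : ∀ k, Aᵀ * f k * A = f (k + 1) := by
      intro k
      simp only [hfdef]
      rw [pow_succ' Aᵀ k, pow_succ A k]
      noncomm_ring
    exact (funext heq : (fun k => Aᵀ * f k * A) = fun k => f (k + 1)) ▸ h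
  have hfix : X = Aᵀ * X * A + G := by
    have h0 : X = f 0 + ∑' k, f (k + 1) := Summable.tsum_eq_zero_add hsummable
    rw [hAXA.tsum_eq] at h0
    have hf0 : f 0 = G := by simp [hfdef]
    rw [hf0] at h0
    exact h0.trans (add_comm _ _)
  -- positive semidefinite
  have hXpsd : X.PosSemidef := by
    rw [Matrix.posSemidef_iff_dotProduct_mulVec]
    constructor
    · rwa [Matrix.IsHermitian, conjTranspose_eq_transpose_of_trivial]
    · intro x
      have h := hsum.mapL (LinearMap.toContinuousLinearMap
        ({ toFun := fun M => x ⬝ᵥ (M *ᵥ x)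
           map_add' := fun M N => by simp [Matrix.add_mulVec, dotProduct_add]
           map_smul' := fun c M => by
             simp [Matrix.smul_mulVec, dotProduct_smul] } :
          Matrix (Fin n) (Fin n) ℝ →ₗ[ℝ] ℝ))
      simp only [LinearMap.coe_toContinuousLinearMap', LinearMap.coe_mk, AddHom.coe_mk] at h
      rw [star_trivial]
      rw [← h.tsum_eq]
      apply tsum_nonneg
      intro k
      have := (hfk k).dotProduct_mulVec_nonneg x
      rwa [star_trivial] at this
  -- positive definite
  have hXpd : X.PosDef := by
    rw [hfix]
    apply Matrix.PosDef.posSemidef_add _ hG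
    have := hXpsd.conjTranspose_mul_mul_same A
    rwa [conjTranspose_eq_transpose_of_trivial] at this
  refine ⟨hXpd, hXsymm, hfix, ?_⟩
  -- uniqueness
  intro W hW
  have hD : W - X = Aᵀ * (W - X) * A := by
    conv_lhs => rw [hW, hfix]
    noncomm_ring
  have hDk : ∀ k : ℕ, W - X = Aᵀ ^ k * (W - X) * A ^ k := by
    intro k
    induction k with
    | zero => simp
    | succ k ih =>
      calc W - X = Aᵀ ^ k * (W - X) * A ^ k := ih
        _ = Aᵀ ^ k * (Aᵀ * (W - X) * A) * A ^ k := by rw [← hD]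
        _ = Aᵀ ^ (k + 1) * (W - X) * A ^ (k + 1) := by
            rw [pow_succ Aᵀ k, pow_succ' A k]
            noncomm_ring
  have hnorm : ∀ᶠ k in atTop, ‖W - X‖ ≤ ‖W - X‖ * (r₂ * r₁) ^ k := by
    filter_upwards [hev₁, hev₂] with k hk1 hk2
    calc ‖W - X‖ = ‖Aᵀ ^ k * (W - X) * A ^ k‖ := by rw [← hDk k]
      _ ≤ ‖Aᵀ ^ k * (W - X)‖ * ‖A ^ k‖ := norm_mul_le _ _
      _ ≤ ‖Aᵀ ^ k‖ * ‖W - X‖ * ‖A ^ k‖ := by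
          apply mul_le_mul_of_nonneg_right (norm_mul_le _ _) (norm_nonneg _)
      _ ≤ r₂ ^ k * ‖W - X‖ * r₁ ^ k := by
          apply mul_le_mul (mul_le_mul_of_nonneg_right hk2 (norm_nonneg _)) hk1
            (norm_nonneg _) (by positivity)
      _ = ‖W - X‖ * (r₂ * r₁) ^ k := by ring
  have htend : Filter.Tendsto (fun k : ℕ => ‖W - X‖ * (r₂ * r₁) ^ k) atTop (nhds 0) := by
    have h0 : (0:ℝ) ≤ r₂ * r₁ := by positivity
    have h1 : r₂ * r₁ < 1 := by nlinarith
    have := (tendsto_pow_atTop_nhds_zero_of_lt_one h0 h1).const_mul ‖W - X‖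
    simpa using this
  have hle : ‖W - X‖ ≤ 0 := ge_of_tendsto htend hnorm
  have : W - X = 0 := by
    have := norm_le_zero_iff.mp hle
    exact this
  exact sub_eq_zero.mp this

end aux

theorem stmt6 (n : ℕ) (A S : Matrix (Fin n) (Fin n) ℝ)
    (hA : IsUnit A) (hAc : Contracting A) (hS : S.PosDef) :
    (∃! Y : Matrix (Fin n) (Fin n) ℝ,
      Y.IsSymm ∧ IsUnit Y ∧ Y * (A + Aᵀ⁻¹ * S) * Y + Y * Aᵀ⁻¹ - A * Y = 0) ∧
    (∀ Y : Matrix (Fin n) (Fin n) ℝ,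
      Y.IsSymm → IsUnit Y → Y * (A + Aᵀ⁻¹ * S) * Y + Y * Aᵀ⁻¹ - A * Y = 0 →
        (-Y).PosDef ∧ Y = -(∑' i : ℕ, Aᵀ ^ i * (Aᵀ * A + S) * A ^ i)⁻¹) := by
  classical
  set X := ∑' i : ℕ, Aᵀ ^ i * (Aᵀ * A + S) * A ^ i with hXdef
  set C := A + Aᵀ⁻¹ * S with hCdef
  have hXpd : X.PosDef := (master A S hAc hS).1
  have hXs : Xᵀ = X := (master A S hAc hS).2.1
  have hfix : X = Aᵀ * X * A + (Aᵀ * A + S) := (master A S hAc hS).2.2.1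
  have huniq : ∀ W : Matrix (Fin n) (Fin n) ℝ, W = Aᵀ * W * A + (Aᵀ * A + S) → W = X :=
    (master A S hAc hS).2.2.2
  have hATdet : IsUnit Aᵀ.det := by
    rw [Matrix.det_transpose]; exact (Matrix.isUnit_iff_isUnit_det A).mp hA
  have hAT1 : Aᵀ * Aᵀ⁻¹ = 1 := Matrix.mul_nonsing_inv _ hATdet
  have hAT2 : Aᵀ⁻¹ * Aᵀ = 1 := Matrix.nonsing_inv_mul _ hATdet
  have hAT1' : ∀ M : Matrix (Fin n) (Fin n) ℝ, Aᵀ * (Aᵀ⁻¹ * M) = M := fun M => by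
    rw [← Matrix.mul_assoc, hAT1, Matrix.one_mul]
  have hAT2' : ∀ M : Matrix (Fin n) (Fin n) ℝ, Aᵀ⁻¹ * (Aᵀ * M) = M := fun M => by
    rw [← Matrix.mul_assoc, hAT2, Matrix.one_mul]
  have hXdetu : IsUnit X.det := (Matrix.isUnit_iff_isUnit_det X).mp hXpd.isUnit
  have hX1 : X * X⁻¹ = 1 := Matrix.mul_nonsing_inv _ hXdetu
  have hX2 : X⁻¹ * X = 1 := Matrix.nonsing_inv_mul _ hXdetu
  have hX2' : ∀ M : Matrix (Fin n) (Fin n) ℝ, X⁻¹ * (X * M) = M := fun M => by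
    rw [← Matrix.mul_assoc, hX2, Matrix.one_mul]
  have hG : Aᵀ * C = Aᵀ * A + S := by
    rw [hCdef, Matrix.mul_add, hAT1' S]
  have hkey : Aᵀ⁻¹ * X = X * A + C := by
    have h := congrArg (fun M => Aᵀ⁻¹ * M) hfix
    simp only [Matrix.mul_add] at h
    rw [Matrix.mul_assoc Aᵀ X A, hAT2', hAT2'] at h
    exact h
  have hC : C = Aᵀ⁻¹ * X - X * A := by rw [hkey]; abel
  -- the candidate solution
  have hY₀symm : (-X⁻¹).IsSymm := by
    rw [Matrix.IsSymm, Matrix.transpose_neg, Matrix.transpose_nonsing_inv, hXs]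
  have hY₀unit : IsUnit (-X⁻¹) := hXpd.inv.isUnit.neg
  have e1 : X⁻¹ * (Aᵀ⁻¹ * X - X * A) * X⁻¹ = X⁻¹ * Aᵀ⁻¹ - A * X⁻¹ := by
    simp only [Matrix.mul_sub, Matrix.sub_mul, Matrix.mul_assoc, hX1, hX2',
      Matrix.mul_one]
  have heqY₀ : (-X⁻¹) * C * (-X⁻¹) + (-X⁻¹) * Aᵀ⁻¹ - A * (-X⁻¹) = 0 := by
    simp only [Matrix.neg_mul, Matrix.mul_neg, neg_neg]
    rw [hC, e1]
    abel
  -- uniqueness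
  have huniqY : ∀ Y : Matrix (Fin n) (Fin n) ℝ, Y.IsSymm → IsUnit Y →
      Y * C * Y + Y * Aᵀ⁻¹ - A * Y = 0 → Y = -X⁻¹ := by
    intro Y hs hu heq
    have hYdet : IsUnit Y.det := (Matrix.isUnit_iff_isUnit_det Y).mp hu
    have hY1 : Y * Y⁻¹ = 1 := Matrix.mul_nonsing_inv _ hYdet
    have hY2 : Y⁻¹ * Y = 1 := Matrix.nonsing_inv_mul _ hYdet
    have hY2' : ∀ M : Matrix (Fin n) (Fin n) ℝ, Y⁻¹ * (Y * M) = M := fun M => by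
      rw [← Matrix.mul_assoc, hY2, Matrix.one_mul]
    have hmid : C + Aᵀ⁻¹ * Y⁻¹ - Y⁻¹ * A = 0 := by
      have h := congrArg (fun M => Y⁻¹ * M * Y⁻¹) heq
      simp only [Matrix.mul_add, Matrix.add_mul, Matrix.mul_sub, Matrix.sub_mul,
        Matrix.mul_assoc, hY1, hY2', Matrix.mul_one, Matrix.mul_zero, Matrix.zero_mul] at h
      convert h using 2 <;> try rw [Matrix.mul_assoc]
    have h1 : Aᵀ⁻¹ * Y⁻¹ = Y⁻¹ * A - C := by
      apply sub_eq_zero.mp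
      calc Aᵀ⁻¹ * Y⁻¹ - (Y⁻¹ * A - C) = C + Aᵀ⁻¹ * Y⁻¹ - Y⁻¹ * A := by abel
        _ = 0 := hmid
    have h2 : Y⁻¹ = Aᵀ * (Y⁻¹ * A) - Aᵀ * C := by
      have h := congrArg (fun M => Aᵀ * M) h1
      simpa [hAT1', Matrix.mul_sub] using h
    have hW : -Y⁻¹ = Aᵀ * (-Y⁻¹) * A + (Aᵀ * A + S) := by
      rw [← hG]
      conv_lhs => rw [h2]
      noncomm_ring
    have h3 := huniq (-Y⁻¹) hW
    have h4 : Y⁻¹ = -X := by rw [← h3, neg_neg]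
    have h5 : (-X)⁻¹ = -(X⁻¹) := Matrix.inv_eq_right_inv
      (by rw [Matrix.neg_mul, Matrix.mul_neg, neg_neg, hX1])
    rw [← Matrix.nonsing_inv_nonsing_inv Y hYdet, h4, h5]
  refine ⟨⟨-X⁻¹, ⟨hY₀symm, hY₀unit, heqY₀⟩, fun Y hY => huniqY Y hY.1 hY.2.1 hY.2.2⟩,
    fun Y hs hu he => ?_⟩
  have h6 := huniqY Y hs hu he
  refine ⟨?_, h6⟩
  rw [h6, neg_neg]
  exact hXpd.inv
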